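/- arXiv:2412.20120 — 7 statements merged into one kernel-verified Lean document; each statement's English description precedes it below -/
import Mathlib

section
/- Every outerplanar graph with at least 4 vertices has two nonadjacent vertices each of degree at most 2. -/
open SimpleGraph

variable {V : Type*}

/-- A finite graph is outerplanar iff its vertices can be placed (in some order) on a
circle so that all edges can be drawn as pairwise non-crossing chords.  Cutting the
circle open, this says there is a bijection `f : V ≃ Fin n` such that no two edges
interleave: there are no edges `ab`, `cd` with `f a < f c < f b < f d`. -/
def Outerplanar [Fintype V] (G : SimpleGraph V) : Prop :=
  ∃ f : V ≃ Fin (Fintype.card V), ∀ a b c d : V, G.Adj a b → G.Adj c d →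
    ¬ (f a < f c ∧ f c < f b ∧ f b < f d)

private lemma deg_le_two_of_nbrs [Fintype V] (G : SimpleGraph V) [DecidableRel G.Adj]
    (p : V → ℕ) (hp : Function.Injective p) (u : V) (i j : ℕ)
    (h : ∀ w, G.Adj u w → p w = i ∨ p w = j) : G.degree u ≤ 2 := by
  classical
  have hsub : G.neighborFinset u ⊆ Finset.univ.filter (fun w => p w = i ∨ p w = j) := by
    intro w hw
    simp only [Finset.mem_filter, Finset.mem_univ, true_and]
    exact h w ((G.mem_neighborFinset u w).1 hw)
  have h2 : (Finset.univ.filter (fun w => p w = i ∨ p w = j) : Finset V).card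
      ≤ ({i, j} : Finset ℕ).card := by
    apply Finset.card_le_card_of_injOn p
    · intro a ha
      simp only [Finset.mem_coe, Finset.mem_filter] at ha
      rcases ha.2 with h' | h' <;> simp [h']
    · exact fun a _ b _ hab => hp hab
  have h3 : ({i, j} : Finset ℕ).card ≤ 2 := by
    by_cases hij : i = j <;> simp [hij]
  calc G.degree u = (G.neighborFinset u).card := rfl
    _ ≤ _ := Finset.card_le_card hsub
    _ ≤ ({i, j} : Finset ℕ).card := h2
    _ ≤ 2 := h3

private lemma key_lemma [Fintype V] (G : SimpleGraph V) [DecidableRel G.Adj]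
    (n : ℕ) (hcard : 4 ≤ n) (p : V → ℕ) (hp : Function.Injective p)
    (hplt : ∀ v, p v < n) (hsurj : ∀ i, i < n → ∃ v, p v = i)
    (hcr : ∀ a b c d, G.Adj a b → G.Adj c d → ¬ (p a < p c ∧ p c < p b ∧ p b < p d)) :
    ∃ a b : V, a ≠ b ∧ ¬ G.Adj a b ∧ G.degree a ≤ 2 ∧ G.degree b ≤ 2 := by
  classical
  set E2 : Finset (V × V) :=
    Finset.univ.filter (fun q => G.Adj q.1 q.2 ∧ p q.1 + 2 ≤ p q.2) with hE2
  have hE2mem : ∀ x y : V, (x, y) ∈ E2 ↔ G.Adj x y ∧ p x + 2 ≤ p y := fun x y =>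
    ⟨fun h => (Finset.mem_filter.1 h).2, fun h => Finset.mem_filter.2 ⟨Finset.mem_univ _, h⟩⟩
  have gap_or : ∀ x w, G.Adj x w →
      (p w + 1 = p x ∨ p w = p x + 1) ∨ ((x, w) ∈ E2 ∨ (w, x) ∈ E2) := by
    intro x w h
    have hne : p x ≠ p w := fun he => (G.ne_of_adj h) (hp he)
    rcases lt_trichotomy (p x) (p w) with hlt | he | hgt
    · by_cases h2 : p x + 2 ≤ p w
      · exact Or.inr (Or.inl ((hE2mem _ _).2 ⟨h, h2⟩))
      · exact Or.inl (Or.inr (by omega))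
    · exact absurd he hne
    · by_cases h2 : p w + 2 ≤ p x
      · exact Or.inr (Or.inr ((hE2mem _ _).2 ⟨h.symm, h2⟩))
      · exact Or.inl (Or.inl (by omega))
  have nest : ∀ x y z w : V, (x, y) ∈ E2 → (z, w) ∈ E2 →
      (p x ≤ p z ∧ p w ≤ p y) ∨ (p z ≤ p x ∧ p y ≤ p w) ∨ p y ≤ p z ∨ p w ≤ p x := by
    intro x y z w hq hr
    obtain ⟨hq1, hq2⟩ := (hE2mem x y).1 hq
    obtain ⟨hr1, hr2⟩ := (hE2mem z w).1 hr
    have c1 := hcr x y z w hq1 hr1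
    have c2 := hcr z w x y hr1 hq1
    omega
  by_cases hE : E2.Nonempty
  · -- there is a long edge
    obtain ⟨⟨a0, b0⟩, hmE2, hmmin'⟩ := Finset.exists_min_image E2 (fun q => p q.2 - p q.1) hE
    have hmin : ∀ x y, (x, y) ∈ E2 → p b0 - p a0 ≤ p y - p x := fun x y h => hmmin' (x, y) h
    obtain ⟨hmadj, hmgap⟩ := (hE2mem a0 b0).1 hmE2
    obtain ⟨u, hu⟩ := hsurj (p a0 + 1) (by have := hplt b0; omega)
    have hu_nbr : ∀ w, G.Adj u w → p w = p a0 ∨ p w = p a0 + 2 := by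
      intro w hw
      rcases gap_or u w hw with h1 | (h2 | h2)
      · omega
      · exfalso
        have hmin2 := hmin u w h2
        have hnst := nest a0 b0 u w hmE2 h2
        obtain ⟨_, hg⟩ := (hE2mem u w).1 h2
        omega
      · exfalso
        have hnst := nest a0 b0 w u hmE2 h2
        obtain ⟨_, hg⟩ := (hE2mem w u).1 h2
        omega
    by_cases hA : ∃ x y, (x, y) ∈ E2 ∧ (p b0 ≤ p x ∨ p y ≤ p a0)
    · -- Case A : a long edge to the side of the minimal one
      obtain ⟨x0, y0, hxy0, hside0⟩ := hA
      set Aset := E2.filter (fun q => p b0 ≤ p q.1 ∨ p q.2 ≤ p a0) with hAset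
      have hAne : Aset.Nonempty := ⟨(x0, y0), Finset.mem_filter.2 ⟨hxy0, hside0⟩⟩
      obtain ⟨⟨c0, d0⟩, hcdmem, hcdmin'⟩ :=
        Finset.exists_min_image Aset (fun q => p q.2 - p q.1) hAne
      have hcdE2 : (c0, d0) ∈ E2 := (Finset.mem_filter.1 hcdmem).1
      have hcdside : p b0 ≤ p c0 ∨ p d0 ≤ p a0 := (Finset.mem_filter.1 hcdmem).2
      obtain ⟨hcdadj, hcdgap⟩ := (hE2mem c0 d0).1 hcdE2
      have hcmin : ∀ x y, (x, y) ∈ E2 → (p b0 ≤ p x ∨ p y ≤ p a0) →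
          p d0 - p c0 ≤ p y - p x :=
        fun x y hmem hs => hcdmin' (x, y) (Finset.mem_filter.2 ⟨hmem, hs⟩)
      obtain ⟨v, hv⟩ := hsurj (p c0 + 1) (by have := hplt d0; omega)
      have hv_nbr : ∀ w, G.Adj v w → p w = p c0 ∨ p w = p c0 + 2 := by
        intro w hw
        rcases gap_or v w hw with h1 | (h2 | h2)
        · omega
        · exfalso
          obtain ⟨_, hg⟩ := (hE2mem v w).1 h2
          have hnst := nest c0 d0 v w hcdE2 h2
          have hmin2 := hcmin v w h2 (by omega)
          omega
        · exfalso
          obtain ⟨_, hg⟩ := (hE2mem w v).1 h2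
          have hnst := nest c0 d0 w v hcdE2 h2
          omega
      refine ⟨u, v, ?_, ?_, ?_, ?_⟩
      · intro h; rw [h] at hu; omega
      · intro h; have := hu_nbr v h; omega
      · exact deg_le_two_of_nbrs G p hp u _ _ hu_nbr
      · exact deg_le_two_of_nbrs G p hp v _ _ hv_nbr
    · -- Case B : every long edge contains the minimal one
      push_neg at hA
      have Hcont : ∀ x y, (x, y) ∈ E2 → p x ≤ p a0 ∧ p b0 ≤ p y := by
        intro x y hmem
        have hnst := nest a0 b0 x y hmE2 hmem
        have hmin2 := hmin x y hmem
        have hside := hA x y hmem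
        obtain ⟨_, hg⟩ := (hE2mem x y).1 hmem
        omega
      obtain ⟨⟨A0, B0⟩, hMmem, hMmax'⟩ :=
        Finset.exists_max_image E2 (fun q => p q.2 - p q.1) hE
      have hMmax : ∀ x y, (x, y) ∈ E2 → p y - p x ≤ p B0 - p A0 :=
        fun x y h => hMmax' (x, y) h
      obtain ⟨hMadj, hMgap⟩ := (hE2mem A0 B0).1 hMmem
      have HcontM := Hcont A0 B0 hMmem
      have Hsub : ∀ x y, (x, y) ∈ E2 → p A0 ≤ p x ∧ p y ≤ p B0 := by
        intro x y hmem
        have hnst := nest A0 B0 x y hMmem hmem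
        have h1 := Hcont x y hmem
        have h2 := hMmax x y hmem
        obtain ⟨_, hg⟩ := (hE2mem x y).1 hmem
        omega
      by_cases hout : ∃ v, p v < p A0 ∨ p B0 < p v
      · -- B1 : a vertex outside the maximal long edge
        obtain ⟨v, hvout⟩ := hout
        have hv_nbr : ∀ w, G.Adj v w → p w + 1 = p v ∨ p w = p v + 1 := by
          intro w hw
          rcases gap_or v w hw with h1 | (h2 | h2)
          · exact h1
          · exfalso
            obtain ⟨_, hg⟩ := (hE2mem v w).1 h2
            have := Hsub v w h2; omega
          · exfalso
            obtain ⟨_, hg⟩ := (hE2mem w v).1 h2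
            have := Hsub w v h2; omega
        have hsubm := Hsub a0 b0 hmE2
        refine ⟨u, v, ?_, ?_, ?_, ?_⟩
        · intro h; rw [h] at hu; omega
        · intro h; have := hu_nbr v h; omega
        · exact deg_le_two_of_nbrs G p hp u _ _ hu_nbr
        · exact deg_le_two_of_nbrs G p hp v (p v - 1) (p v + 1)
            (fun w hw => by have := hv_nbr w hw; omega)
      · -- B2 : the maximal long edge spans everything
        push_neg at hout
        obtain ⟨z0, hz0⟩ := hsurj 0 (by omega)
        obtain ⟨zn, hzn⟩ := hsurj (n - 1) (by omega)
        have hA0 : p A0 = 0 := by have := hout z0; omega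
        have hB0 : p B0 = n - 1 := by have h1 := hout zn; have := hplt B0; omega
        by_cases hT : ∃ x y, (x, y) ∈ E2 ∧ ¬(p x = 0 ∧ p y = n - 1)
        · -- B2b : there is a long edge other than (0, n-1)
          obtain ⟨x1, y1, hxy1, hxy1ne⟩ := hT
          set T := E2.filter (fun q => ¬(p q.1 = 0 ∧ p q.2 = n - 1)) with hTset
          have hTne : T.Nonempty := ⟨(x1, y1), Finset.mem_filter.2 ⟨hxy1, hxy1ne⟩⟩
          obtain ⟨⟨C0, D0⟩, hCDmem', hCDmax'⟩ :=
            Finset.exists_max_image T (fun q => p q.2 - p q.1) hTne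
          have hCDE2 : (C0, D0) ∈ E2 := (Finset.mem_filter.1 hCDmem').1
          have hCDne : ¬(p C0 = 0 ∧ p D0 = n - 1) := (Finset.mem_filter.1 hCDmem').2
          obtain ⟨hCDadj, hCDgap⟩ := (hE2mem C0 D0).1 hCDE2
          have hCDmax : ∀ x y, (x, y) ∈ E2 → ¬(p x = 0 ∧ p y = n - 1) →
              p y - p x ≤ p D0 - p C0 :=
            fun x y h hne' => hCDmax' (x, y) (Finset.mem_filter.2 ⟨h, hne'⟩)
          have hm_ne : ¬(p a0 = 0 ∧ p b0 = n - 1) := by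
            intro hh
            have h1 := Hcont x1 y1 hxy1
            have h2 := hplt y1
            omega
          have HsubT : ∀ x y, (x, y) ∈ E2 → ¬(p x = 0 ∧ p y = n - 1) →
              p C0 ≤ p x ∧ p y ≤ p D0 := by
            intro x y hmem hne'
            have hnst := nest C0 D0 x y hCDE2 hmem
            have h1 := Hcont x y hmem
            have h2 := Hcont C0 D0 hCDE2
            have h3 := hCDmax x y hmem hne'
            obtain ⟨_, hg⟩ := (hE2mem x y).1 hmem
            omega
          have hmT := HsubT a0 b0 hmE2 hm_ne
          by_cases hmoat : ∃ v, (0 < p v ∧ p v < p C0) ∨ (p D0 < p v ∧ p v < n - 1)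
          · -- a vertex strictly between the hull edge and (C0, D0)
            obtain ⟨v, hvm⟩ := hmoat
            have hv_nbr : ∀ w, G.Adj v w → p w + 1 = p v ∨ p w = p v + 1 := by
              intro w hw
              rcases gap_or v w hw with h1 | (h2 | h2)
              · exact h1
              · exfalso
                obtain ⟨_, hg⟩ := (hE2mem v w).1 h2
                by_cases hc : p v = 0 ∧ p w = n - 1
                · omega
                · have := HsubT v w h2 hc; omega
              · exfalso
                obtain ⟨_, hg⟩ := (hE2mem w v).1 h2
                by_cases hc : p w = 0 ∧ p v = n - 1
                · omega
                · have := HsubT w v h2 hc; omega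
            refine ⟨u, v, ?_, ?_, ?_, ?_⟩
            · intro h; rw [h] at hu; omega
            · intro h; have := hu_nbr v h; omega
            · exact deg_le_two_of_nbrs G p hp u _ _ hu_nbr
            · exact deg_le_two_of_nbrs G p hp v (p v - 1) (p v + 1)
                (fun w hw => by have := hv_nbr w hw; omega)
          · -- no moat: (C0, D0) hugs one side
            have hmoat' : ∀ v, ¬((0 < p v ∧ p v < p C0) ∨ (p D0 < p v ∧ p v < n - 1)) :=
              not_exists.1 hmoat
            obtain ⟨w1, hw1⟩ := hsurj 1 (by omega)
            obtain ⟨w2, hw2⟩ := hsurj (n - 2) (by omega)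
            have hC1 : p C0 ≤ 1 := by have := hmoat' w1; omega
            have hD1 : n - 2 ≤ p D0 := by have := hmoat' w2; omega
            by_cases hCz : p C0 = 0
            · -- then p D0 = n - 2 ; take the vertex at n - 1
              have hD2 : p D0 = n - 2 := by have := hplt D0; omega
              have hz_nbr : ∀ w, G.Adj zn w → p w = n - 2 ∨ p w = 0 := by
                intro w hw
                rcases gap_or zn w hw with h1 | (h2 | h2)
                · have := hplt w; omega
                · exfalso; obtain ⟨_, hg⟩ := (hE2mem zn w).1 h2; have := hplt w; omega
                · by_cases hc : p w = 0 ∧ p zn = n - 1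
                  · omega
                  · exfalso; have := HsubT w zn h2 hc; omega
              refine ⟨u, zn, ?_, ?_, ?_, ?_⟩
              · intro h; rw [h] at hu; omega
              · intro h; have := hu_nbr zn h; omega
              · exact deg_le_two_of_nbrs G p hp u _ _ hu_nbr
              · exact deg_le_two_of_nbrs G p hp zn _ _ hz_nbr
            · -- then p C0 = 1 ; take the vertex at 0
              have hC2 : p C0 = 1 := by omega
              have hz_nbr : ∀ w, G.Adj z0 w → p w = 1 ∨ p w = n - 1 := by
                intro w hw
                rcases gap_or z0 w hw with h1 | (h2 | h2)
                · omega
                · by_cases hc : p z0 = 0 ∧ p w = n - 1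
                  · omega
                  · exfalso; have := HsubT z0 w h2 hc; omega
                · exfalso; obtain ⟨_, hg⟩ := (hE2mem w z0).1 h2; omega
              refine ⟨u, z0, ?_, ?_, ?_, ?_⟩
              · intro h; rw [h] at hu; omega
              · intro h; have := hu_nbr z0 h; omega
              · exact deg_le_two_of_nbrs G p hp u _ _ hu_nbr
              · exact deg_le_two_of_nbrs G p hp z0 _ _ hz_nbr
        · -- B2a : the only long edge is (0, n-1)
          push_neg at hT
          obtain ⟨w1, hw1⟩ := hsurj 1 (by omega)
          have hw1_nbr : ∀ w, G.Adj w1 w → p w = 0 ∨ p w = 2 := by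
            intro w hw
            rcases gap_or w1 w hw with h1 | (h2 | h2)
            · omega
            · exfalso; have := hT w1 w h2; omega
            · exfalso; have := hT w w1 h2; omega
          have hzn_nbr : ∀ w, G.Adj zn w → p w = n - 2 ∨ p w = 0 := by
            intro w hw
            rcases gap_or zn w hw with h1 | (h2 | h2)
            · have := hplt w; omega
            · exfalso; have := hT zn w h2; omega
            · have := hT w zn h2; omega
          refine ⟨w1, zn, ?_, ?_, ?_, ?_⟩
          · intro h; rw [h] at hw1; omega
          · intro h; have := hw1_nbr zn h; omega
          · exact deg_le_two_of_nbrs G p hp w1 _ _ hw1_nbr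
          · exact deg_le_two_of_nbrs G p hp zn _ _ hzn_nbr
  · -- no long edge at all: every vertex has degree ≤ 2
    have hg : ∀ x w, G.Adj x w → p w + 1 = p x ∨ p w = p x + 1 := by
      intro x w h
      rcases gap_or x w h with h1 | h2
      · exact h1
      · exfalso; rcases h2 with h2 | h2 <;> exact hE ⟨_, h2⟩
    obtain ⟨a, ha⟩ := hsurj 0 (by omega)
    obtain ⟨b, hb⟩ := hsurj 2 (by omega)
    refine ⟨a, b, ?_, ?_, ?_, ?_⟩
    · intro h; rw [h] at ha; omega
    · intro h; have := hg a b h; omega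
    · exact deg_le_two_of_nbrs G p hp a 1 1 (fun w hw => by have := hg a w hw; omega)
    · exact deg_le_two_of_nbrs G p hp b 1 3 (fun w hw => by have := hg b w hw; omega)

/-- Every outerplanar graph with at least 4 vertices has two nonadjacent vertices each
of degree at most 2. -/
theorem stmt_2 [Fintype V] (G : SimpleGraph V) [DecidableRel G.Adj]
    (hG : Outerplanar G) (hcard : 4 ≤ Fintype.card V) :
    ∃ a b : V, a ≠ b ∧ ¬ G.Adj a b ∧ G.degree a ≤ 2 ∧ G.degree b ≤ 2 := by
  obtain ⟨f, hf⟩ := hG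
  refine key_lemma G (Fintype.card V) hcard (fun v => (f v : ℕ))
    (fun a b h => f.injective (Fin.val_injective h)) (fun v => (f v).2)
    (fun i hi => ⟨f.symm ⟨i, hi⟩, by simp⟩) ?_
  intro a b c d h1 h2 h3
  exact hf a b c d h1 h2 ⟨Fin.lt_def.2 h3.1, Fin.lt_def.2 h3.2.1, Fin.lt_def.2 h3.2.2⟩
end

section
/- Let G be a finite simple graph and C a minimum clique partition of G. Suppose J ⊆ V(G) is θ-independent in C (each clique of C contains at most one vertex of J), and suppose there exists a clique W ∈ C such that J dominates W and J ∩ W = ∅. Then γ(G) < θ(G). -/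
open SimpleGraph

variable {V : Type*}

/-- `D` is a dominating set of `G`: every vertex not in `D` has a neighbor in `D`. -/
def IsDomSet (G : SimpleGraph V) (D : Finset V) : Prop :=
  ∀ v : V, v ∉ D → ∃ u ∈ D, G.Adj u v

/-- The domination number `γ(G)`. -/
noncomputable def domNum [Fintype V] (G : SimpleGraph V) : ℕ :=
  sInf {n | ∃ D : Finset V, IsDomSet G D ∧ D.card = n}

/-- `P` is a partition of the vertex set of `G` into cliques. -/
def IsCliquePartition (G : SimpleGraph V) (P : Finset (Finset V)) : Prop :=
  (∀ C ∈ P, G.IsClique (C : Set V)) ∧ ∀ v : V, ∃! C : Finset V, C ∈ P ∧ v ∈ C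

/-- The clique covering number `θ(G)`. -/
noncomputable def cliqueCoverNum [Fintype V] (G : SimpleGraph V) : ℕ :=
  sInf {n | ∃ P : Finset (Finset V), IsCliquePartition G P ∧ P.card = n}

/-- `J` is θ-independent in the clique partition `P`: each clique of `P` contains at
most one vertex of `J`. -/
def ThetaIndepIn (P : Finset (Finset V)) (J : Finset V) : Prop :=
  ∀ C ∈ P, ∀ a ∈ J, ∀ b ∈ J, a ∈ C → b ∈ C → a = b

/-- If `C` is a minimum clique partition of `G`, `J` is θ-independent in `C`, and some
clique `W ∈ C` is dominated by `J` with `J ∩ W = ∅`, then `γ(G) < θ(G)`. -/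
theorem stmt_5 [Fintype V] (G : SimpleGraph V)
    (C : Finset (Finset V)) (hC : IsCliquePartition G C)
    (hCmin : C.card = cliqueCoverNum G)
    (J : Finset V) (hJ : ThetaIndepIn C J)
    (W : Finset V) (hW : W ∈ C)
    (hdom : ∀ w ∈ W, w ∈ J ∨ ∃ x ∈ J, G.Adj x w)
    (hdisj : Disjoint J W) :
    domNum G < cliqueCoverNum G := by
  classical
  set f : Finset V → Finset V := fun X =>
    if h : (X ∩ J).Nonempty then {h.choose}
    else if h' : X.Nonempty then {h'.choose} else ∅ with hf
  set D : Finset V := (C.erase W).biUnion f with hD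
  have hfsub : ∀ X, f X ⊆ X := by
    intro X y hy
    simp only [hf] at hy
    split_ifs at hy with h1 h2
    · simp only [Finset.mem_singleton] at hy
      subst hy
      exact (Finset.mem_inter.mp h1.choose_spec).1
    · simp only [Finset.mem_singleton] at hy
      subst hy
      exact h2.choose_spec
    · simp at hy
  have hJD : ∀ j ∈ J, j ∈ D := by
    intro j hj
    obtain ⟨X, ⟨hXC, hjX⟩, _⟩ := hC.2 j
    have hXW : X ≠ W := by
      rintro rfl
      exact Finset.disjoint_left.mp hdisj hj hjX
    have h1 : (X ∩ J).Nonempty := ⟨j, Finset.mem_inter.mpr ⟨hjX, hj⟩⟩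
    have hc := h1.choose_spec
    rw [Finset.mem_inter] at hc
    have heq : h1.choose = j := hJ X hXC _ hc.2 _ hj hc.1 hjX
    refine Finset.mem_biUnion.mpr ⟨X, Finset.mem_erase.mpr ⟨hXW, hXC⟩, ?_⟩
    simp [hf, h1, heq]
  have hdomD : IsDomSet G D := by
    intro v hv
    obtain ⟨X, ⟨hXC, hvX⟩, _⟩ := hC.2 v
    by_cases hXW : X = W
    · subst hXW
      rcases hdom v hvX with hvJ | ⟨x, hxJ, hadj⟩
      · exact absurd (hJD v hvJ) hv
      · exact ⟨x, hJD x hxJ, hadj⟩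
    · have hXne : X.Nonempty := ⟨v, hvX⟩
      obtain ⟨u, hu⟩ : (f X).Nonempty := by
        simp only [hf]
        split_ifs with h1
        · exact Finset.singleton_nonempty _
        · exact Finset.singleton_nonempty _
      have huX := hfsub X hu
      have huD : u ∈ D := Finset.mem_biUnion.mpr ⟨X, Finset.mem_erase.mpr ⟨hXW, hXC⟩, hu⟩
      have hne : u ≠ v := by rintro rfl; exact hv huD
      exact ⟨u, huD, hC.1 X hXC huX hvX hne⟩
  have hcard : D.card ≤ (C.erase W).card := by
    refine Finset.card_biUnion_le.trans ?_
    calc ∑ X ∈ C.erase W, (f X).card ≤ ∑ _X ∈ C.erase W, 1 := by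
          refine Finset.sum_le_sum fun X _ => ?_
          simp only [hf]
          split_ifs <;> simp
      _ = (C.erase W).card := by simp
  have h1 : domNum G ≤ D.card := Nat.sInf_le ⟨D, hdomD, rfl⟩
  calc domNum G ≤ D.card := h1
    _ ≤ (C.erase W).card := hcard
    _ < C.card := Finset.card_erase_lt_of_mem hW
    _ = cliqueCoverNum G := hCmin
end

section
/- Let G be a finite simple graph with no isolated vertices such that γ(G) = θ(G), and let C be a minimum clique partition of G. Then every member of C is a clique that is maximal by inclusion among cliques of G; in particular C contains no singleton cliques. -/
open SimpleGraph

variable {V : Type*}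

/-- If `G` has no isolated vertices, `γ(G) = θ(G)`, and `C` is a minimum clique
partition of `G`, then every member of `C` is a maximal clique (no outside vertex is
adjacent to all of it); in particular `C` has no singleton cliques. -/
theorem stmt_6 [Fintype V] (G : SimpleGraph V)
    (hiso : ∀ x : V, ∃ y : V, G.Adj x y)
    (hgt : domNum G = cliqueCoverNum G)
    (C : Finset (Finset V)) (hC : IsCliquePartition G C)
    (hCmin : C.card = cliqueCoverNum G) :
    ∀ W ∈ C, (∀ x : V, x ∉ W → ¬ ∀ w ∈ W, G.Adj x w) ∧ 2 ≤ W.card := by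
  classical
  -- Step 1: no clique in C is empty
  have hne : ∀ W ∈ C, W.Nonempty := by
    intro W hW
    rw [Finset.nonempty_iff_ne_empty]
    rintro rfl
    have hP : IsCliquePartition G (C.erase ∅) := by
      constructor
      · intro B hB; exact hC.1 B (Finset.mem_of_mem_erase hB)
      · intro v
        obtain ⟨B, ⟨hB, hvB⟩, huniq⟩ := hC.2 v
        refine ⟨B, ⟨Finset.mem_erase.2 ⟨?_, hB⟩, hvB⟩, ?_⟩
        · rintro rfl; exact absurd hvB (Finset.notMem_empty v)
        · rintro B' ⟨hB', hvB'⟩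
          exact huniq B' ⟨Finset.mem_of_mem_erase hB', hvB'⟩
    have h1 : cliqueCoverNum G ≤ (C.erase ∅).card :=
      Nat.sInf_le ⟨C.erase ∅, hP, rfl⟩
    have h2 : (C.erase ∅).card = C.card - 1 := Finset.card_erase_of_mem hW
    have h3 : 1 ≤ C.card := Finset.card_pos.2 ⟨∅, hW⟩
    omega
  -- Step 2: maximality
  have hmax : ∀ W ∈ C, ∀ x : V, x ∉ W → ¬ ∀ w ∈ W, G.Adj x w := by
    intro W hW x hx hadj
    obtain ⟨W', ⟨hW', hxW'⟩, _⟩ := hC.2 x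
    have hWW' : W' ≠ W := fun h => hx (h ▸ hxW')
    set f : Finset V → V := fun B => if h : B.Nonempty then h.choose else x with hf
    have hfmem : ∀ B ∈ C, f B ∈ B := by
      intro B hB
      have h := hne B hB
      simp only [hf, dif_pos h]
      exact h.choose_spec
    set D : Finset V := insert x (((C.erase W).erase W').image f) with hD
    have hdom : IsDomSet G D := by
      intro v hv
      obtain ⟨B, ⟨hB, hvB⟩, huniq⟩ := hC.2 v
      by_cases hBW : B = W
      · exact ⟨x, Finset.mem_insert_self x _, hadj v (hBW ▸ hvB)⟩
      by_cases hBW' : B = W'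
      · subst hBW'
        refine ⟨x, Finset.mem_insert_self x _, ?_⟩
        refine hC.1 B hB hxW' hvB ?_
        rintro rfl; exact hv (Finset.mem_insert_self x _)
      · have hBm : B ∈ (C.erase W).erase W' :=
          Finset.mem_erase.2 ⟨hBW', Finset.mem_erase.2 ⟨hBW, hB⟩⟩
        have hfD : f B ∈ D := Finset.mem_insert_of_mem (Finset.mem_image_of_mem f hBm)
        refine ⟨f B, hfD, ?_⟩
        refine hC.1 B hB (hfmem B hB) hvB ?_
        intro heq
        exact hv (heq ▸ hfD)
    have hγ : domNum G ≤ D.card := Nat.sInf_le ⟨D, hdom, rfl⟩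
    have hc1 : D.card ≤ (((C.erase W).erase W').image f).card + 1 :=
      Finset.card_insert_le _ _
    have hc2 : (((C.erase W).erase W').image f).card ≤ ((C.erase W).erase W').card :=
      Finset.card_image_le
    have hmem' : W' ∈ C.erase W := Finset.mem_erase.2 ⟨hWW', hW'⟩
    have hc3 : ((C.erase W).erase W').card = (C.erase W).card - 1 :=
      Finset.card_erase_of_mem hmem'
    have hc4 : (C.erase W).card = C.card - 1 := Finset.card_erase_of_mem hW
    have hc5 : 1 ≤ (C.erase W).card := Finset.card_pos.2 ⟨W', hmem'⟩
    omega
  intro W hW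
  refine ⟨hmax W hW, ?_⟩
  obtain ⟨w, hw⟩ := hne W hW
  obtain ⟨x, hxadj⟩ := hiso w
  by_contra h
  have hc1 : 1 ≤ W.card := Finset.card_pos.2 ⟨w, hw⟩
  have hc : W.card = 1 := by omega
  obtain ⟨a, ha⟩ := Finset.card_eq_one.1 hc
  subst ha
  have haw : w = a := Finset.mem_singleton.1 hw
  subst haw
  have hx : x ∉ ({w} : Finset V) := by
    simp only [Finset.mem_singleton]
    rintro rfl
    exact G.irrefl hxadj
  exact hmax _ hW x hx (by
    intro w' hw'
    rw [Finset.mem_singleton.1 hw']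
    exact hxadj.symm)
end

section
/- Let G be a finite simple graph and v a vertex with exactly two neighbors u_1, u_2 which are nonadjacent. Suppose there exist vertices u'_1 ∈ N(u_1) \ N(u_2) and u'_2 ∈ N(u_2) \ N(u_1) with u'_1, u'_2 ≠ v. Then γ(G) < θ(G). -/
open SimpleGraph

variable {V : Type*}

open Classical in
lemma aux_dom [Fintype V] (G : SimpleGraph V) (P : Finset (Finset V))
    (hP : IsCliquePartition G P) (Cv : Finset V) (hCv : Cv ∈ P)
    (x y : V) (hx : x ∉ Cv) (hy : y ∉ Cv) (hxy : x ≠ y) (hxyadj : ¬ G.Adj x y)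
    (hdom : ∀ w ∈ Cv, G.Adj x w ∨ G.Adj y w) :
    ∃ D : Finset V, IsDomSet G D ∧ D.card < P.card := by
  classical
  obtain ⟨Cx, ⟨hCxP, hxCx⟩, huCx⟩ := hP.2 x
  obtain ⟨Cy, ⟨hCyP, hyCy⟩, huCy⟩ := hP.2 y
  have hCxv : Cx ≠ Cv := fun h => hx (h ▸ hxCx)
  have hCyv : Cy ≠ Cv := fun h => hy (h ▸ hyCy)
  have hxCy : x ∉ Cy := fun hxy' =>
    hxyadj ((hP.1 Cy hCyP) (by simpa using hxy') (by simpa using hyCy) hxy)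
  set rep : Finset V → V := fun C =>
    if x ∈ C then x else if y ∈ C then y else if h : C.Nonempty then h.choose else x with hrep
  refine ⟨(P.erase Cv).image rep, ?_, ?_⟩
  · intro w hw
    obtain ⟨Cw, ⟨hCwP, hwCw⟩, huCw⟩ := hP.2 w
    by_cases hCwv : Cw = Cv
    · rcases hdom w (hCwv ▸ hwCw) with h | h
      · refine ⟨x, ?_, h⟩
        refine Finset.mem_image.2 ⟨Cx, Finset.mem_erase.2 ⟨hCxv, hCxP⟩, ?_⟩
        simp [hrep, hxCx]
      · refine ⟨y, ?_, h⟩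
        refine Finset.mem_image.2 ⟨Cy, Finset.mem_erase.2 ⟨hCyv, hCyP⟩, ?_⟩
        simp [hrep, hxCy, hyCy]
    · have hrD : rep Cw ∈ (P.erase Cv).image rep :=
        Finset.mem_image.2 ⟨Cw, Finset.mem_erase.2 ⟨hCwv, hCwP⟩, rfl⟩
      have hrCw : rep Cw ∈ Cw := by
        by_cases h1 : x ∈ Cw
        · simpa [hrep, h1] using h1
        · by_cases h2 : y ∈ Cw
          · simpa [hrep, h1, h2] using h2
          · have hne : Cw.Nonempty := ⟨w, hwCw⟩
            simpa [hrep, h1, h2, hne] using hne.choose_spec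
      refine ⟨rep Cw, hrD, ?_⟩
      exact (hP.1 Cw hCwP) (by simpa using hrCw) (by simpa using hwCw)
        (fun h => hw (h ▸ hrD))
  · calc ((P.erase Cv).image rep).card ≤ (P.erase Cv).card := Finset.card_image_le
      _ < P.card := Finset.card_erase_lt_of_mem hCv

lemma exists_clique_partition [Fintype V] (G : SimpleGraph V) :
    ∃ P : Finset (Finset V), IsCliquePartition G P := by
  classical
  refine ⟨Finset.univ.image (fun a => {a}), ?_, ?_⟩
  · intro C hC
    obtain ⟨a, _, rfl⟩ := Finset.mem_image.1 hC
    simp [SimpleGraph.isClique_iff, Set.Pairwise]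
  · intro w
    refine ⟨{w}, ⟨Finset.mem_image.2 ⟨w, Finset.mem_univ _, rfl⟩, Finset.mem_singleton_self w⟩, ?_⟩
    rintro C ⟨hC, hwC⟩
    obtain ⟨a, _, rfl⟩ := Finset.mem_image.1 hC
    simp_all

/-- Let `v` have exactly two neighbors `u₁, u₂`, which are nonadjacent, and suppose
there are `u₁' ∈ N(u₁) \ N(u₂)` and `u₂' ∈ N(u₂) \ N(u₁)`, both different from `v`.
Then `γ(G) < θ(G)`. -/
theorem stmt_8 [Fintype V] (G : SimpleGraph V)
    (v u₁ u₂ u₁' u₂' : V) (hne : u₁ ≠ u₂)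
    (hN : G.neighborSet v = {u₁, u₂}) (h12 : ¬ G.Adj u₁ u₂)
    (h1 : G.Adj u₁ u₁') (h1' : ¬ G.Adj u₂ u₁') (h1v : u₁' ≠ v)
    (h2 : G.Adj u₂ u₂') (h2' : ¬ G.Adj u₁ u₂') (h2v : u₂' ≠ v) :
    domNum G < cliqueCoverNum G := by
  classical
  obtain ⟨P0, hP0⟩ := exists_clique_partition G
  have hSne : {n | ∃ P : Finset (Finset V), IsCliquePartition G P ∧ P.card = n}.Nonempty :=
    ⟨P0.card, P0, hP0, rfl⟩
  obtain ⟨P, hP, hPcard⟩ := Nat.sInf_mem hSne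
  obtain ⟨Cv, ⟨hCvP, hvCv⟩, _⟩ := hP.2 v
  have hsub : ∀ w ∈ Cv, w = v ∨ w = u₁ ∨ w = u₂ := by
    intro w hw
    by_cases hwv : w = v
    · exact Or.inl hwv
    · have : G.Adj v w := (hP.1 Cv hCvP) (by simpa using hvCv) (by simpa using hw)
        (fun h => hwv h.symm)
      have : w ∈ G.neighborSet v := this
      rw [hN] at this
      exact Or.inr (by simpa using this)
  have hu1u2 : u₂' ≠ u₁ := fun h => h12 (G.adj_symm (h ▸ h2))
  have hu1'u2 : u₁' ≠ u₂ := fun h => h12 (h ▸ h1)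
  have key : ∃ D : Finset V, IsDomSet G D ∧ D.card < P.card := by
    by_cases hu2 : u₂ ∈ Cv
    · -- use x = u₁, y = u₂'
      have hu1Cv : u₁ ∉ Cv := by
        intro h
        exact h12 ((hP.1 Cv hCvP) (by simpa using h) (by simpa using hu2) hne)
      have hu2'Cv : u₂' ∉ Cv := by
        intro h
        rcases hsub u₂' h with h' | h' | h'
        · exact h2v h'
        · exact hu1u2 h'
        · exact G.irrefl (h' ▸ h2)
      refine aux_dom G P hP Cv hCvP u₁ u₂' hu1Cv hu2'Cv (fun h => hu1u2 h.symm) h2' ?_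
      intro w hw
      rcases hsub w hw with h' | rfl | rfl
      · rw [h']
        exact Or.inl (by
          have : u₁ ∈ G.neighborSet v := by rw [hN]; simp
          exact G.adj_symm this)
      · exact absurd hw hu1Cv
      · exact Or.inr h2.symm
    · -- use x = u₂, y = u₁'
      have hu1'Cv : u₁' ∉ Cv := by
        intro h
        rcases hsub u₁' h with h' | h' | h'
        · exact h1v h'
        · exact G.irrefl (h' ▸ h1)
        · exact hu2 (h' ▸ h)
      refine aux_dom G P hP Cv hCvP u₂ u₁' hu2 hu1'Cv (fun h => hu1'u2 h.symm) h1' ?_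
      intro w hw
      rcases hsub w hw with h' | rfl | rfl
      · rw [h']
        exact Or.inl (by
          have : u₂ ∈ G.neighborSet v := by rw [hN]; simp
          exact G.adj_symm this)
      · exact Or.inr h1.symm
      · exact absurd hw hu2
  obtain ⟨D, hD, hDcard⟩ := key
  have h1le : domNum G ≤ D.card := Nat.sInf_le ⟨D, hD, rfl⟩
  calc domNum G ≤ D.card := h1le
    _ < P.card := hDcard
    _ = cliqueCoverNum G := hPcard
end

section
/- Let G be a finite simple graph and v a vertex with N(v) = {u_1, ..., u_s}, s ≥ 3, such that N(v) is an independent set and no u_i is a pendant vertex. Then γ(G) < θ(G). -/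
open SimpleGraph

variable {V : Type*}

/-- If `v` has at least 3 neighbors, its neighborhood is an independent set, and no
neighbor of `v` is pendant, then `γ(G) < θ(G)`. -/
theorem stmt_10 [Fintype V] (G : SimpleGraph V) [DecidableRel G.Adj]
    (v : V) (hs : 3 ≤ G.degree v)
    (hindep : ∀ a ∈ G.neighborSet v, ∀ b ∈ G.neighborSet v, a ≠ b → ¬ G.Adj a b)
    (hpend : ∀ u ∈ G.neighborSet v, G.degree u ≠ 1) :
    domNum G < cliqueCoverNum G := by
  classical
  -- the set defining the clique cover number is nonempty
  have hne : {n | ∃ P : Finset (Finset V), IsCliquePartition G P ∧ P.card = n}.Nonempty := by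
    refine ⟨_, Finset.univ.image (fun x => ({x} : Finset V)), ⟨?_, ?_⟩, rfl⟩
    · intro C hC
      simp only [Finset.mem_image] at hC
      obtain ⟨x, -, rfl⟩ := hC
      simp only [Finset.coe_singleton]
      exact G.isClique_singleton x
    · intro x
      refine ⟨{x}, ⟨Finset.mem_image.2 ⟨x, Finset.mem_univ x, rfl⟩, Finset.mem_singleton_self x⟩, ?_⟩
      rintro C ⟨hC, hx⟩
      simp only [Finset.mem_image] at hC
      obtain ⟨y, -, rfl⟩ := hC
      simp only [Finset.mem_singleton] at hx
      subst hx; rfl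
  -- a minimum clique partition
  obtain ⟨P, hP, hPcard⟩ : ∃ P : Finset (Finset V), IsCliquePartition G P ∧
      P.card = cliqueCoverNum G := Nat.sInf_mem hne
  -- the clique map
  have hclx : ∀ x : V, ∃ C : Finset V, C ∈ P ∧ x ∈ C ∧ ∀ C' ∈ P, x ∈ C' → C' = C := by
    intro x
    obtain ⟨C, ⟨hC1, hC2⟩, hu⟩ := hP.2 x
    exact ⟨C, hC1, hC2, fun C' h1 h2 => hu C' ⟨h1, h2⟩⟩
  choose cl clmem clself cluniq using hclx
  -- P is nonempty, so θ ≥ 1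
  have hθ1 : 1 ≤ cliqueCoverNum G := by
    rw [← hPcard]
    exact Finset.card_pos.2 ⟨cl v, clmem v⟩
  -- no empty clique in P (by minimality)
  have hnoempty : (∅ : Finset V) ∉ P := by
    intro hem
    have hP' : IsCliquePartition G (P.erase ∅) := by
      constructor
      · intro C hC
        exact hP.1 C (Finset.mem_of_mem_erase hC)
      · intro x
        refine ⟨cl x, ⟨Finset.mem_erase.2 ⟨?_, clmem x⟩, clself x⟩, ?_⟩
        · intro h; exact Finset.notMem_empty x (h ▸ clself x)
        · rintro C ⟨hC1, hC2⟩
          exact cluniq x C (Finset.mem_of_mem_erase hC1) hC2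
    have hle : cliqueCoverNum G ≤ (P.erase ∅).card := Nat.sInf_le ⟨P.erase ∅, hP', rfl⟩
    rw [Finset.card_erase_of_mem hem, hPcard] at hle
    omega
  have hCne : ∀ C ∈ P, C.Nonempty := by
    intro C hC
    rcases C.eq_empty_or_nonempty with h | h
    · exact absurd (h ▸ hC) hnoempty
    · exact h
  set Nv := G.neighborFinset v with hNv
  have hNvadj : ∀ x ∈ Nv, G.Adj v x := fun x hx => (G.mem_neighborFinset v x).1 hx
  have hNvset : ∀ x ∈ Nv, x ∈ G.neighborSet v := fun x hx => (G.mem_neighborFinset v x).1 hx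
  have hNvcard : 3 ≤ Nv.card := by rwa [hNv, G.card_neighborFinset_eq_degree]
  -- cl v minus v has at most one element
  have hSsub : ∀ x ∈ (cl v).erase v, x ∈ Nv := by
    intro x hx
    obtain ⟨hxv, hxC⟩ := Finset.mem_erase.1 hx
    exact (G.mem_neighborFinset v x).2 (hP.1 (cl v) (clmem v) (clself v) hxC (Ne.symm hxv))
  have hS1 : ((cl v).erase v).card ≤ 1 := by
    by_contra h
    push_neg at h
    obtain ⟨a, ha, b, hb, hab⟩ := Finset.one_lt_card.1 h
    exact hindep a (hNvset a (hSsub a ha)) b (hNvset b (hSsub b hb)) hab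
      (hP.1 (cl v) (clmem v) (Finset.mem_erase.1 ha).2 (Finset.mem_erase.1 hb).2 hab)
  -- obtain u ∈ Nv with cl v ⊆ {v, u}
  obtain ⟨u, hu, hCvu⟩ : ∃ u ∈ Nv, ∀ x ∈ cl v, x = v ∨ x = u := by
    rcases ((cl v).erase v).eq_empty_or_nonempty with h | ⟨u, hu⟩
    · obtain ⟨u, hu⟩ : Nv.Nonempty := Finset.card_pos.1 (by omega)
      refine ⟨u, hu, fun x hx => Or.inl ?_⟩
      by_contra hxv
      exact absurd (h ▸ Finset.mem_erase.2 ⟨hxv, hx⟩) (Finset.notMem_empty x)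
    · refine ⟨u, hSsub u hu, fun x hx => ?_⟩
      by_cases hxv : x = v
      · exact Or.inl hxv
      · exact Or.inr (Finset.card_le_one.1 hS1 x (Finset.mem_erase.2 ⟨hxv, hx⟩) u hu)
  -- u has a neighbor w ≠ v
  have hdegu : 2 ≤ G.degree u := by
    have h1 : v ∈ G.neighborFinset u := (G.mem_neighborFinset u v).2 (hNvadj u hu).symm
    have h2 : 1 ≤ G.degree u := by
      rw [← G.card_neighborFinset_eq_degree]
      exact Finset.card_pos.2 ⟨v, h1⟩
    have h3 := hpend u (hNvset u hu)
    omega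
  obtain ⟨w, hwv, hwu⟩ : ∃ w, w ≠ v ∧ G.Adj u w := by
    have h1 : v ∈ G.neighborFinset u := (G.mem_neighborFinset u v).2 (hNvadj u hu).symm
    have h2 : 1 ≤ ((G.neighborFinset u).erase v).card := by
      rw [Finset.card_erase_of_mem h1, G.card_neighborFinset_eq_degree]
      omega
    obtain ⟨w, hw⟩ := Finset.card_pos.1 h2
    obtain ⟨hw1, hw2⟩ := Finset.mem_erase.1 hw
    exact ⟨w, hw1, (G.mem_neighborFinset u w).1 hw2⟩
  have hwnu : w ≠ u := fun h => G.irrefl (h ▸ hwu)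
  have hwCv : w ∉ cl v := fun h => by rcases hCvu w h with h' | h' <;> [exact hwv h'; exact hwnu h']
  -- two distinct neighbors of v outside cl v
  obtain ⟨a, ha, b, hb, hab⟩ : ∃ a ∈ Nv \ cl v, ∃ b ∈ Nv \ cl v, a ≠ b := by
    have hsub : Nv ∩ cl v ⊆ (cl v).erase v := by
      intro x hx
      obtain ⟨hx1, hx2⟩ := Finset.mem_inter.1 hx
      refine Finset.mem_erase.2 ⟨?_, hx2⟩
      intro h
      exact G.irrefl (h ▸ hNvadj x hx1)
    have h1 : (Nv ∩ cl v).card ≤ 1 := le_trans (Finset.card_le_card hsub) hS1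
    have h2 : Nv \ cl v = Nv \ (Nv ∩ cl v) := by
      ext x; simp only [Finset.mem_sdiff, Finset.mem_inter]; tauto
    have h3 : 1 < (Nv \ cl v).card := by
      rw [h2, Finset.card_sdiff_of_subset (Finset.inter_subset_left)]
      omega
    obtain ⟨a, ha, b, hb, hab⟩ := Finset.one_lt_card.1 h3
    exact ⟨a, ha, b, hb, hab⟩
  have haNv := (Finset.mem_sdiff.1 ha).1
  have hbNv := (Finset.mem_sdiff.1 hb).1
  have haCv := (Finset.mem_sdiff.1 ha).2
  have hbCv := (Finset.mem_sdiff.1 hb).2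
  -- cl a ≠ cl b
  have hclab : cl a ≠ cl b := by
    intro h
    refine hindep a (hNvset a haNv) b (hNvset b hbNv) hab ?_
    exact hP.1 (cl a) (clmem a) (clself a) (h ▸ clself b) hab
  -- pick c among a,b with w ∉ cl c
  obtain ⟨c, hcNv, hcCv, hwc⟩ : ∃ c, c ∈ Nv ∧ c ∉ cl v ∧ w ∉ cl c := by
    by_cases h : w ∈ cl a
    · refine ⟨b, hbNv, hbCv, fun h' => hclab ?_⟩
      rw [cluniq w (cl a) (clmem a) h, cluniq w (cl b) (clmem b) h']
    · exact ⟨a, haNv, haCv, h⟩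
  -- the representative function
  set rep : Finset V → V := fun C =>
    if w ∈ C then w
    else if h : (C ∩ Nv).Nonempty then h.choose
    else if h2 : C.Nonempty then h2.choose else v
    with hrep
  have repmem : ∀ C ∈ P, rep C ∈ C := by
    intro C hC
    rw [hrep]
    dsimp only
    split_ifs with h1 h2 h3
    · exact h1
    · exact (Finset.mem_inter.1 h2.choose_spec).1
    · exact h3.choose_spec
    · exact absurd (hCne C hC) h3
  have repw : ∀ C, w ∈ C → rep C = w := by
    intro C h; rw [hrep]; dsimp only; rw [if_pos h]
  have repNv : ∀ C, w ∉ C → (C ∩ Nv).Nonempty → rep C ∈ Nv := by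
    intro C h1 h2
    rw [hrep]; dsimp only
    rw [if_neg h1, dif_pos h2]
    exact (Finset.mem_inter.1 h2.choose_spec).2
  -- the dominating set
  set D : Finset V := (P.erase (cl v)).image rep with hD
  have hclD : ∀ x : V, x ∉ cl v → rep (cl x) ∈ D := by
    intro x hx
    refine Finset.mem_image.2 ⟨cl x, Finset.mem_erase.2 ⟨?_, clmem x⟩, rfl⟩
    intro h
    exact hx (h ▸ clself x)
  have hdom : IsDomSet G D := by
    intro x hxD
    by_cases hxv : x = v
    · -- v is dominated by rep (cl c) ∈ Nv
      subst hxv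
      have hcl : rep (cl c) ∈ D := hclD c hcCv
      have hrepc : rep (cl c) ∈ Nv := repNv (cl c) hwc ⟨c, Finset.mem_inter.2 ⟨clself c, hcNv⟩⟩
      exact ⟨rep (cl c), hcl, (hNvadj _ hrepc).symm⟩
    · by_cases hxu : x = u
      · -- u is dominated by w
        subst hxu
        have h1 : cl w ≠ cl v := fun h => hwCv (h ▸ clself w)
        have h2 : rep (cl w) ∈ D := hclD w hwCv
        rw [repw (cl w) (clself w)] at h2
        exact ⟨w, h2, hwu.symm⟩
      · -- generic vertex
        have hxCv : x ∉ cl v := by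
          intro h
          rcases hCvu x h with h' | h' <;> [exact hxv h'; exact hxu h']
        have h1 : rep (cl x) ∈ D := hclD x hxCv
        have h2 : rep (cl x) ∈ cl x := repmem (cl x) (clmem x)
        have h3 : rep (cl x) ≠ x := fun h => hxD (h ▸ h1)
        exact ⟨rep (cl x), h1, hP.1 (cl x) (clmem x) h2 (clself x) h3⟩
  -- counting
  have hdcard : D.card ≤ cliqueCoverNum G - 1 := by
    calc D.card ≤ (P.erase (cl v)).card := Finset.card_image_le
    _ = P.card - 1 := Finset.card_erase_of_mem (clmem v)
    _ = cliqueCoverNum G - 1 := by rw [hPcard]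
  have hdle : domNum G ≤ D.card := Nat.sInf_le ⟨D, hdom, rfl⟩
  omega
end

section
/- Let G be a finite simple graph and v a vertex with exactly two nonadjacent neighbors u_1, u_2, and suppose there exist two nonadjacent vertices x, y, both distinct from v, each adjacent to both u_1 and u_2. Then γ(G) < θ(G). -/
open SimpleGraph

variable {V : Type*}

/-- If `v` has exactly two nonadjacent neighbors `u₁, u₂` and there exist nonadjacent
vertices `x ≠ y`, both distinct from `v` and both adjacent to `u₁` and `u₂`, then
`γ(G) < θ(G)`. -/
theorem stmt_11 [Fintype V] (G : SimpleGraph V)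
    (v u₁ u₂ x y : V) (hne : u₁ ≠ u₂)
    (hN : G.neighborSet v = {u₁, u₂}) (h12 : ¬ G.Adj u₁ u₂)
    (hxy : x ≠ y) (hxv : x ≠ v) (hyv : y ≠ v) (hxyadj : ¬ G.Adj x y)
    (hx1 : G.Adj u₁ x) (hx2 : G.Adj u₂ x) (hy1 : G.Adj u₁ y) (hy2 : G.Adj u₂ y) :
    domNum G < cliqueCoverNum G := by
  classical
  set S : Set ℕ := {n | ∃ P : Finset (Finset V), IsCliquePartition G P ∧ P.card = n} with hS
  have hne_set : S.Nonempty := by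
    refine ⟨_, Finset.univ.image (fun w => ({w} : Finset V)), ⟨?_, ?_⟩, rfl⟩
    · intro C hC
      simp only [Finset.mem_image] at hC
      obtain ⟨a, -, rfl⟩ := hC
      simp [Set.Pairwise]
    · intro w
      refine ⟨{w}, ⟨Finset.mem_image_of_mem _ (Finset.mem_univ w), Finset.mem_singleton_self w⟩, ?_⟩
      rintro C ⟨hC, hwC⟩
      simp only [Finset.mem_image] at hC
      obtain ⟨a, -, rfl⟩ := hC
      simp_all [Finset.mem_singleton]
  have hmem := Nat.sInf_mem hne_set
  obtain ⟨P, hP, hPcard⟩ := hmem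
  have hθ : cliqueCoverNum G = P.card := hPcard.symm
  -- every clique in P is nonempty
  have hPne : ∀ C ∈ P, C.Nonempty := by
    intro C hC
    rcases C.eq_empty_or_nonempty with rfl | h
    · exfalso
      have hP' : IsCliquePartition G (P.erase ∅) := by
        constructor
        · intro C hC'
          exact hP.1 C (Finset.mem_of_mem_erase hC')
        · intro w
          obtain ⟨C, ⟨hCP, hwC⟩, huniq⟩ := hP.2 w
          refine ⟨C, ⟨Finset.mem_erase.2 ⟨Finset.ne_empty_of_mem hwC, hCP⟩, hwC⟩, ?_⟩
          rintro C' ⟨hC', hw'⟩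
          exact huniq C' ⟨Finset.mem_of_mem_erase hC', hw'⟩
      have hle : sInf S ≤ (P.erase ∅).card := Nat.sInf_le ⟨P.erase ∅, hP', rfl⟩
      have hcard := Finset.card_erase_of_mem hC
      have hpos : 1 ≤ P.card := Finset.card_pos.2 ⟨∅, hC⟩
      omega
    · exact h
  -- the unique clique containing each vertex
  have hcl0 : ∀ w : V, ∃ C, (C ∈ P ∧ w ∈ C) ∧ ∀ C', C' ∈ P ∧ w ∈ C' → C' = C := fun w => hP.2 w
  choose cl hcl using hcl0
  have hclP : ∀ w, cl w ∈ P := fun w => (hcl w).1.1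
  have hclmem : ∀ w, w ∈ cl w := fun w => (hcl w).1.2
  have hclique : ∀ w : V, ∀ a ∈ cl w, ∀ b ∈ cl w, a ≠ b → G.Adj a b := by
    intro w a ha b hb hab
    exact hP.1 (cl w) (hclP w) (by exact_mod_cast ha) (by exact_mod_cast hb) hab
  -- v's neighbors
  have hv1 : G.Adj v u₁ := by
    have : u₁ ∈ G.neighborSet v := by rw [hN]; simp
    exact this
  have hv2 : G.Adj v u₂ := by
    have : u₂ ∈ G.neighborSet v := by rw [hN]; simp
    exact this
  have hCsub : ∀ w ∈ cl v, w = v ∨ w = u₁ ∨ w = u₂ := by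
    intro w hw
    by_cases hwv : w = v
    · exact Or.inl hwv
    · right
      have hadj : G.Adj v w := hclique v v (hclmem v) w hw (Ne.symm hwv)
      have : w ∈ G.neighborSet v := hadj
      rw [hN] at this
      simpa using this
  have hxC : x ∉ cl v := by
    intro h
    rcases hCsub x h with h' | h' | h'
    · exact hxv h'
    · exact hx1.ne' h'
    · exact hx2.ne' h'
  have hyC : y ∉ cl v := by
    intro h
    rcases hCsub y h with h' | h' | h'
    · exact hyv h'
    · exact hy1.ne' h'
    · exact hy2.ne' h'
  have hclxy : cl x ≠ cl y := by
    intro h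
    exact hxyadj (hclique x x (hclmem x) y (h ▸ hclmem y) hxy)
  -- default representative
  let r₀ : Finset V → V := fun C' => if h : C'.Nonempty then h.choose else v
  have hr₀ : ∀ C' ∈ P, r₀ C' ∈ C' := by
    intro C' hC'
    have h := hPne C' hC'
    simp only [r₀, dif_pos h]
    exact h.choose_spec
  -- key lemma: a good representative function yields the result
  have key : ∀ r : Finset V → V, (∀ C' ∈ P.erase (cl v), r C' ∈ C') →
      (∀ w ∈ cl v, ∃ C' ∈ P.erase (cl v), G.Adj (r C') w) →
      domNum G < cliqueCoverNum G := by
    intro r ha hb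
    set D : Finset V := (P.erase (cl v)).image r with hD
    have hdom : IsDomSet G D := by
      intro w hwD
      by_cases hw : cl w = cl v
      · have hwv : w ∈ cl v := hw ▸ hclmem w
        obtain ⟨C', hC', hadj⟩ := hb w hwv
        exact ⟨r C', Finset.mem_image_of_mem r hC', hadj⟩
      · have hC' : cl w ∈ P.erase (cl v) := Finset.mem_erase.2 ⟨hw, hclP w⟩
        have hr : r (cl w) ∈ cl w := ha _ hC'
        have hrw : r (cl w) ≠ w := by
          intro h
          exact hwD (h ▸ Finset.mem_image_of_mem r hC')
        exact ⟨r (cl w), Finset.mem_image_of_mem r hC',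
          hclique w (r (cl w)) hr w (hclmem w) hrw⟩
    have h1 : domNum G ≤ D.card := Nat.sInf_le ⟨D, hdom, rfl⟩
    have h2 : D.card ≤ (P.erase (cl v)).card := Finset.card_image_le
    have h3 := Finset.card_erase_of_mem (hclP v)
    have h4 : 1 ≤ P.card := Finset.card_pos.2 ⟨cl v, hclP v⟩
    omega
  -- common case: cl v ⊆ {v, a}, b ∉ cl v, v ~ b, a ~ x, a ~ y
  have caseBC : ∀ a b : V, (∀ w ∈ cl v, w = v ∨ w = a) → b ∉ cl v →
      G.Adj v b → G.Adj a x → G.Adj a y → domNum G < cliqueCoverNum G := by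
    intro a b hsub hbC hvb hax hay
    obtain ⟨z, hzC, hzb, hzadj⟩ : ∃ z, z ∉ cl v ∧ cl z ≠ cl b ∧ G.Adj a z := by
      by_cases h : cl x = cl b
      · exact ⟨y, hyC, fun h' => hclxy (h.trans h'.symm), hay⟩
      · exact ⟨x, hxC, h, hax⟩
    have hclbC : cl b ≠ cl v := fun h => hbC (h ▸ hclmem b)
    have hclzC : cl z ≠ cl v := fun h => hzC (h ▸ hclmem z)
    refine key (fun C' => if C' = cl b then b else if C' = cl z then z else r₀ C') ?_ ?_
    · intro C' hC'
      by_cases h1 : C' = cl b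
      · simp only [if_pos h1]; exact h1 ▸ hclmem b
      · by_cases h2 : C' = cl z
        · simp only [if_neg h1, if_pos h2]; exact h2 ▸ hclmem z
        · simp only [if_neg h1, if_neg h2]; exact hr₀ C' (Finset.mem_of_mem_erase hC')
    · intro w hw
      rcases hsub w hw with rfl | rfl
      · refine ⟨cl b, Finset.mem_erase.2 ⟨hclbC, hclP b⟩, ?_⟩
        simp only [if_pos rfl]
        exact hvb.symm
      · refine ⟨cl z, Finset.mem_erase.2 ⟨hclzC, hclP z⟩, ?_⟩
        simp only [if_neg hzb, if_pos rfl]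
        exact hzadj.symm
  by_cases h2v : u₂ ∈ cl v
  · have h1v : u₁ ∉ cl v := by
      intro h1v
      exact h12 (hclique v u₁ h1v u₂ h2v hne)
    refine caseBC u₂ u₁ ?_ h1v hv1 hx2.symm.symm hy2
    intro w hw
    rcases hCsub w hw with h | h | h
    · exact Or.inl h
    · exact absurd (h ▸ hw) h1v
    · exact Or.inr h
  · refine caseBC u₁ u₂ ?_ h2v hv2 hx1 hy1
    intro w hw
    rcases hCsub w hw with h | h | h
    · exact Or.inl h
    · exact Or.inr h
    · exact absurd (h ▸ hw) h2v
end

section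
/- For every graph G and every vertex v ∈ V(G) with γ(G) = θ(G), there exists a minimum dominating set D of G containing v. -/
open SimpleGraph

variable {V : Type*}

/-- If `γ(G) = θ(G)`, then every vertex lies in some minimum dominating set. -/
theorem stmt_12 [Fintype V] (G : SimpleGraph V)
    (hgt : domNum G = cliqueCoverNum G) (v : V) :
    ∃ D : Finset V, IsDomSet G D ∧ D.card = domNum G ∧ v ∈ D := by
  classical
  -- the set defining cliqueCoverNum is nonempty (singleton partition)
  have hne : {n | ∃ P : Finset (Finset V), IsCliquePartition G P ∧ P.card = n}.Nonempty := by
    refine ⟨(Finset.univ.image (fun x : V => ({x} : Finset V))).card,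
      ⟨Finset.univ.image (fun x : V => ({x} : Finset V)), ⟨?_, ?_⟩, rfl⟩⟩
    · intro C hC
      simp only [Finset.mem_image] at hC
      obtain ⟨x, -, rfl⟩ := hC
      simp [SimpleGraph.IsClique]
    · intro u
      refine ⟨{u}, ⟨Finset.mem_image_of_mem _ (Finset.mem_univ u), Finset.mem_singleton_self u⟩, ?_⟩
      rintro C ⟨hC, huC⟩
      simp only [Finset.mem_image] at hC
      obtain ⟨x, -, rfl⟩ := hC
      simp only [Finset.mem_singleton] at huC
      subst huC; rfl
  obtain ⟨P, hP, hPcard⟩ := Nat.sInf_mem hne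
  -- representative function
  set f : Finset V → V := fun C => if h : C.Nonempty then (if v ∈ C then v else h.choose) else v
    with hf
  have hfC : ∀ C : Finset V, C.Nonempty → f C ∈ C := by
    intro C hC
    simp only [hf, dif_pos hC]
    split_ifs with h
    · exact h
    · exact hC.choose_spec
  set D : Finset V := P.image f with hD
  obtain ⟨C₀, ⟨hC₀P, hvC₀⟩, -⟩ := hP.2 v
  have hvD : v ∈ D := by
    have : f C₀ = v := by 
      have hne0 : C₀.Nonempty := ⟨v, hvC₀⟩
      simp [hf, dif_pos hne0, hvC₀]
    exact this ▸ Finset.mem_image_of_mem f hC₀P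
  have hdom : IsDomSet G D := by
    intro u huD
    obtain ⟨C, ⟨hCP, huC⟩, -⟩ := hP.2 u
    have hCne : C.Nonempty := ⟨u, huC⟩
    have hfCmem : f C ∈ D := Finset.mem_image_of_mem f hCP
    refine ⟨f C, hfCmem, ?_⟩
    have hne' : f C ≠ u := fun h => huD (h ▸ hfCmem)
    exact hP.1 C hCP (hfC C hCne) huC hne'
  have h1 : domNum G ≤ D.card := Nat.sInf_le ⟨D, hdom, rfl⟩
  have h2 : D.card ≤ domNum G := by
    calc D.card ≤ P.card := Finset.card_image_le
    _ = cliqueCoverNum G := hPcard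
    _ = domNum G := hgt.symm
  exact ⟨D, hdom, le_antisymm h2 h1, hvD⟩
end
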